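/- Let g be a |k|-graded Lie algebra over a field of characteristic zero, X ∈ g_{-k}, and Z₁ ∈ g₁, ..., Z_{k-1} ∈ g_{k-1}, Z_k ∈ g_k. Suppose W := Σ (1/(i₁!···i_k!)) (ad Z₁)^{i₁}···(ad Z_k)^{i_k}(X) − X (sum over all (i₁,...,i_k) ≠ 0) lies in p = g₀ ⊕ ... ⊕ g_k. Then [Z_ℓ, X] = 0 for all ℓ = 1, ..., k−1, and consequently W = [Z_k, X] + ½[Z_k, [Z_k, X]]. -/

import Mathlib

open LieAlgebra

section Stmt18Aux
variable {K L : Type*} [Field K] [LieRing L] [LieAlgebra K L]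

lemma stmt18_prod_one {ι : Type*} (f : ι → Module.End K L) (l : List ι)
    (h : ∀ a ∈ l, f a = 1) : (l.map f).prod = 1 := by
  apply List.prod_eq_one
  intro x hx
  rcases List.mem_map.mp hx with ⟨a, ha, rfl⟩
  exact h a ha

lemma stmt18_prod_single {ι : Type*} [Preorder ι] (f : ι → Module.End K L) :
    ∀ l : List ι, l.Pairwise (· < ·) → ∀ a, a ∈ l → (∀ c ∈ l, c ≠ a → f c = 1) →
      (l.map f).prod = f a := by
  intro l
  induction l with
  | nil => intro _ a ha; exact absurd ha List.not_mem_nil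
  | cons h t ih =>
    intro hp a ha h1
    rw [List.pairwise_cons] at hp
    rcases List.mem_cons.mp ha with rfl | hat
    · have h2 : (t.map f).prod = 1 :=
        stmt18_prod_one f t fun c hc => h1 c (List.mem_cons_of_mem _ hc) (hp.1 c hc).ne'
      simp [h2]
    · have h3 : f h = 1 := h1 h List.mem_cons_self (hp.1 a hat).ne
      have h4 := ih hp.2 a hat fun c hc hca => h1 c (List.mem_cons_of_mem _ hc) hca
      simp [h3, h4]

lemma stmt18_tail {ι : Type*} [Preorder ι] (f : ι → Module.End K L) (x : L) :
    ∀ l : List ι, l.Pairwise (· < ·) → ∀ a, a ∈ l → (∀ c ∈ l, a < c → f c = 1) →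
      f a x = 0 → (l.map f).prod x = 0 := by
  intro l
  induction l with
  | nil => intro _ a ha; exact absurd ha List.not_mem_nil
  | cons h t ih =>
    intro hp a ha h1 h0
    rw [List.pairwise_cons] at hp
    rw [List.map_cons, List.prod_cons, Module.End.mul_apply]
    rcases List.mem_cons.mp ha with rfl | hat
    · have h2 : (t.map f).prod = 1 :=
        stmt18_prod_one f t fun c hc => h1 c (List.mem_cons_of_mem _ hc) (hp.1 c hc)
      rw [h2]; simpa using h0
    · have h4 := ih hp.2 a hat (fun c hc hca => h1 c (List.mem_cons_of_mem _ hc) hca) h0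
      rw [h4]; simp

lemma stmt18_tail2 {ι : Type*} [Preorder ι] (f : ι → Module.End K L) (x : L) :
    ∀ l : List ι, l.Pairwise (· < ·) → ∀ a b, a ∈ l → b ∈ l → a < b →
      (∀ c ∈ l, a < c → c ≠ b → f c = 1) → f a (f b x) = 0 → (l.map f).prod x = 0 := by
  intro l
  induction l with
  | nil => intro _ a b ha; exact absurd ha List.not_mem_nil
  | cons h t ih =>
    intro hp a b ha hb hab h1 h0
    rw [List.pairwise_cons] at hp
    rw [List.map_cons, List.prod_cons, Module.End.mul_apply]
    rcases List.mem_cons.mp ha with rfl | hat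
    · have hbt : b ∈ t := by
        rcases List.mem_cons.mp hb with rfl | hbt
        · exact absurd hab (lt_irrefl _)
        · exact hbt
      have h2 : (t.map f).prod = f b :=
        stmt18_prod_single f t hp.2 b hbt fun c hc hcb =>
          h1 c (List.mem_cons_of_mem _ hc) (hp.1 c hc) hcb
      rw [h2]; exact h0
    · have hbt : b ∈ t := by
        rcases List.mem_cons.mp hb with rfl | hbt
        · exact absurd (lt_trans (hp.1 a hat) hab) (lt_irrefl _)
        · exact hbt
      have h4 := ih hp.2 a b hat hbt hab
        (fun c hc hca hcb => h1 c (List.mem_cons_of_mem _ hc) hca hcb) h0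
      rw [h4]; simp

lemma stmt18_pow_kill (f : Module.End K L) (x : L) (h : f x = 0) :
    ∀ n : ℕ, 1 ≤ n → (f ^ n) x = 0 := by
  intro n hn
  obtain ⟨m, rfl⟩ : ∃ m, n = m + 1 := ⟨n - 1, by omega⟩
  rw [pow_succ, Module.End.mul_apply, h, map_zero]

lemma stmt18_pow_mem (g : ℤ → Submodule K L)
    (hbracket : ∀ (i j : ℤ) (x y : L), x ∈ g i → y ∈ g j → ⁅x, y⁆ ∈ g (i + j))
    (z : L) (dz : ℤ) (hz : z ∈ g dz) :
    ∀ (n : ℕ) (m : ℤ) (x : L), x ∈ g m → ((ad K L z) ^ n) x ∈ g (m + n * dz) := by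
  intro n
  induction n with
  | zero => intro m x hx; simpa using hx
  | succ n ih =>
    intro m x hx
    have h1 := hbracket dz (m + n * dz) z _ hz (ih m x hx)
    have heq : dz + (m + (n : ℤ) * dz) = m + ((n : ℕ) + 1 : ℕ) * dz := by push_cast; ring
    rw [heq] at h1
    rw [pow_succ', Module.End.mul_apply]
    simpa [ad_apply] using h1

lemma stmt18_prod_mem {ι : Type*} (g : ℤ → Submodule K L) (f : ι → Module.End K L)
    (df : ι → ℤ) (hf : ∀ (a : ι) (m : ℤ) (x : L), x ∈ g m → f a x ∈ g (m + df a)) :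
    ∀ (l : List ι) (m : ℤ) (x : L), x ∈ g m →
      (l.map f).prod x ∈ g (m + (l.map df).sum) := by
  intro l
  induction l with
  | nil => intro m x hx; simpa using hx
  | cons a t ih =>
    intro m x hx
    have h1 := hf a (m + (t.map df).sum) _ (ih m x hx)
    have heq : m + (t.map df).sum + df a = m + ((a :: t).map df).sum := by
      simp; ring
    rw [heq] at h1
    simpa [List.prod_cons, Module.End.mul_apply] using h1

end Stmt18Aux

theorem stmt18 {K L : Type*} [Field K] [CharZero K] [LieRing L] [LieAlgebra K L]
    (k : ℕ) (hk : 1 ≤ k) (g : ℤ → Submodule K L)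
    (hinternal : DirectSum.IsInternal g)
    (hbracket : ∀ (i j : ℤ) (x y : L), x ∈ g i → y ∈ g j → ⁅x, y⁆ ∈ g (i + j))
    (hbound : ∀ m : ℤ, (k : ℤ) < |m| → g m = ⊥)
    (X : L) (hX : X ∈ g (-(k : ℤ)))
    (Zf : Fin k → L) (hZ : ∀ ℓ : Fin k, Zf ℓ ∈ g ((ℓ : ℤ) + 1))
    (W : L)
    (hW : W = (∑ i : Fin k → Fin (2 * k + 1),
        (∏ ℓ, ((Nat.factorial (i ℓ) : K)))⁻¹ •
          (((List.finRange k).map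
              (fun ℓ => (ad K L (Zf ℓ)) ^ ((i ℓ : ℕ)))).prod X)) - X)
    (hWp : W ∈ ⨆ j ∈ Finset.Icc (0 : ℤ) (k : ℤ), g j) :
    (∀ ℓ : Fin k, (ℓ : ℕ) + 1 ≤ k - 1 → ⁅Zf ℓ, X⁆ = 0) ∧
      W = ⁅Zf ⟨k - 1, by omega⟩, X⁆ +
        (1 / 2 : K) • ⁅Zf ⟨k - 1, by omega⟩, ⁅Zf ⟨k - 1, by omega⟩, X⁆⁆ := by
  classical
  -- the projection onto the degree-m component
  obtain ⟨proj, hproj_same, hproj_ne⟩ :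
      ∃ proj : ℤ → (L →ₗ[K] L),
        (∀ (m : ℤ) (x : L), x ∈ g m → proj m x = x) ∧
        (∀ (m m' : ℤ) (x : L), x ∈ g m' → m ≠ m' → proj m x = 0) := by
    refine ⟨fun m => (g m).subtype ∘ₗ (DirectSum.component K ℤ (fun j => ↥(g j)) m) ∘ₗ
      (LinearEquiv.ofBijective (DirectSum.coeLinearMap g) hinternal).symm.toLinearMap,
      ?_, ?_⟩
    · intro m x hx
      have h1 := hinternal.ofBijective_coeLinearMap_of_mem hx
      simp only [LinearMap.coe_comp, Function.comp_apply, LinearEquiv.coe_coe,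
        Submodule.coe_subtype]
      rw [← DirectSum.apply_eq_component, h1]
    · intro m m' x hx hne
      have h1 := hinternal.ofBijective_coeLinearMap_of_mem_ne (Ne.symm hne) hx
      simp only [LinearMap.coe_comp, Function.comp_apply, LinearEquiv.coe_coe,
        Submodule.coe_subtype]
      rw [← DirectSum.apply_eq_component, h1]
      rfl
  -- each summand lies in a specific graded piece
  have hTmem : ∀ i : Fin k → Fin (2 * k + 1),
      ((List.finRange k).map (fun ℓ => (ad K L (Zf ℓ)) ^ ((i ℓ : ℕ)))).prod X ∈
        g (-(k : ℤ) + ((∑ ℓ : Fin k, ((ℓ : ℕ) + 1) * (i ℓ : ℕ) : ℕ) : ℤ)) := by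
    intro i
    have hf : ∀ (ℓ : Fin k) (m : ℤ) (x : L), x ∈ g m →
        ((ad K L (Zf ℓ)) ^ ((i ℓ : ℕ))) x ∈
          g (m + ((((ℓ : ℕ) + 1) * (i ℓ : ℕ) : ℕ) : ℤ)) := by
      intro ℓ m x hx
      have h := stmt18_pow_mem g hbracket (Zf ℓ) ((ℓ : ℤ) + 1) (hZ ℓ) ((i ℓ : ℕ)) m x hx
      have heq : m + ((i ℓ : ℕ) : ℤ) * ((ℓ : ℤ) + 1)
          = m + ((((ℓ : ℕ) + 1) * (i ℓ : ℕ) : ℕ) : ℤ) := by push_cast; ring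
      rwa [heq] at h
    have h := stmt18_prod_mem g _ _ hf (List.finRange k) _ X hX
    have heq : -(k : ℤ) + ((List.finRange k).map
          (fun ℓ : Fin k => ((((ℓ : ℕ) + 1) * (i ℓ : ℕ) : ℕ) : ℤ))).sum
        = -(k : ℤ) + ((∑ ℓ : Fin k, ((ℓ : ℕ) + 1) * (i ℓ : ℕ) : ℕ) : ℤ) := by
      rw [Fin.sum_univ_def, Nat.cast_list_sum, List.map_map]
      congr 2
    rwa [heq] at h
  have hprojW : ∀ m : ℤ, m < 0 → proj m W = 0 := by
    intro m hm
    have hle : (⨆ j ∈ Finset.Icc (0 : ℤ) (k : ℤ), g j) ≤ LinearMap.ker (proj m) := by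
      refine iSup₂_le fun j hj => ?_
      intro x hx
      have hj0 : (0 : ℤ) ≤ j := (Finset.mem_Icc.mp hj).1
      simp only [LinearMap.mem_ker]
      exact hproj_ne m j x hx (by omega)
    exact LinearMap.mem_ker.mp (hle hWp)
  have hsum0 : ∀ m : ℤ, m < 0 → m ≠ -(k : ℤ) →
      ∑ i : Fin k → Fin (2 * k + 1),
        (∏ ℓ, ((Nat.factorial (i ℓ) : K)))⁻¹ •
          proj m (((List.finRange k).map
            (fun ℓ => (ad K L (Zf ℓ)) ^ ((i ℓ : ℕ)))).prod X) = 0 := by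
    intro m hm hmk
    have h0 := hprojW m hm
    rw [hW, map_sub, map_sum] at h0
    simp only [map_smul] at h0
    rw [hproj_ne m _ X hX hmk, sub_zero] at h0
    exact h0
  have key : ∀ d : ℕ, ∀ ℓ0 : Fin k, (ℓ0 : ℕ) + 1 = d → d ≤ k - 1 → ⁅Zf ℓ0, X⁆ = 0 := by
    intro d
    induction d using Nat.strong_induction_on with
    | _ d IH =>
    intro ℓ0 hℓ0 hdk
    have hd1 : 1 ≤ d := by omega
    have IH' : ∀ ℓ' : Fin k, (ℓ' : ℕ) + 1 < d → ⁅Zf ℓ', X⁆ = 0 :=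
      fun ℓ' h => IH ((ℓ' : ℕ) + 1) h ℓ' rfl (by omega)
    set m : ℤ := -(k : ℤ) + d with hm
    have h0 := hsum0 m (by omega) (by omega)
    set i0 : Fin k → Fin (2 * k + 1) :=
      fun ℓ => if ℓ = ℓ0 then (⟨1, by omega⟩ : Fin (2 * k + 1)) else 0 with hi0
    rw [Finset.sum_eq_single i0] at h0
    · have hprod : ((List.finRange k).map
          (fun ℓ => (ad K L (Zf ℓ)) ^ ((i0 ℓ : ℕ)))).prod = ad K L (Zf ℓ0) := by
        rw [stmt18_prod_single _ (List.finRange k) (List.pairwise_lt_finRange k) ℓ0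
          (List.mem_finRange ℓ0) ?_]
        · simp [hi0]
        · intro c hc hca
          simp [hi0, hca, pow_zero]
      have hmem : ⁅Zf ℓ0, X⁆ ∈ g m := by
        have h2 := hbracket _ _ _ _ (hZ ℓ0) hX
        have heq : ((ℓ0 : ℤ) + 1) + (-(k : ℤ)) = m := by
          rw [hm]
          have : ((ℓ0 : ℕ) : ℤ) + 1 = (d : ℤ) := by exact_mod_cast congrArg Nat.cast hℓ0
          omega
        rwa [heq] at h2
      have hc1 : (∏ ℓ, ((Nat.factorial (i0 ℓ) : K))) = 1 := by
        apply Finset.prod_eq_one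
        intro ℓ _
        by_cases hℓ : ℓ = ℓ0 <;> simp [hi0, hℓ, Nat.factorial]
      rw [hprod, ad_apply, hproj_same m _ hmem, hc1, inv_one, one_smul] at h0
      exact h0
    · intro i _ hii0
      by_cases hdeg : (∑ ℓ : Fin k, ((ℓ : ℕ) + 1) * (i ℓ : ℕ)) = d
      · -- the term itself vanishes
        set S := Finset.univ.filter (fun ℓ : Fin k => (i ℓ : ℕ) ≠ 0) with hS
        have hSne : S.Nonempty := by
          by_contra hSe
          rw [Finset.not_nonempty_iff_eq_empty] at hSe
          have hzero : ∀ ℓ : Fin k, (i ℓ : ℕ) = 0 := by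
            intro ℓ
            by_contra hne
            have : ℓ ∈ S := Finset.mem_filter.mpr ⟨Finset.mem_univ _, hne⟩
            rw [hSe] at this
            exact absurd this (Finset.notMem_empty ℓ)
          have : (∑ ℓ : Fin k, ((ℓ : ℕ) + 1) * (i ℓ : ℕ)) = 0 :=
            Finset.sum_eq_zero fun ℓ _ => by rw [hzero ℓ, mul_zero]
          omega
        set a := S.max' hSne with ha
        have haS : a ∈ S := Finset.max'_mem _ _
        have hia : (i a : ℕ) ≠ 0 := (Finset.mem_filter.mp haS).2
        have hup : ∀ c : Fin k, a < c → (i c : ℕ) = 0 := by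
          intro c hc
          by_contra hne
          exact absurd (S.le_max' c (Finset.mem_filter.mpr ⟨Finset.mem_univ _, hne⟩))
            (not_le.mpr hc)
        have hbound1 : ((a : ℕ) + 1) * (i a : ℕ) ≤ d := by
          rw [← hdeg]
          exact Finset.single_le_sum (f := fun ℓ : Fin k => ((ℓ : ℕ) + 1) * (i ℓ : ℕ))
            (fun _ _ => Nat.zero_le _) (Finset.mem_univ a)
        have ha1d : (a : ℕ) + 1 ≤ d :=
          le_trans (Nat.le_mul_of_pos_right _ (Nat.pos_of_ne_zero hia)) hbound1
        by_cases hcase : (a : ℕ) + 1 = d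
        · exfalso
          apply hii0
          have hia_le : (i a : ℕ) ≤ 1 := by
            by_contra h2
            push_neg at h2
            nlinarith
          have hia1 : (i a : ℕ) = 1 := by omega
          have hrest : ∀ ℓ : Fin k, ℓ ≠ a → (i ℓ : ℕ) = 0 := by
            intro ℓ hℓ
            by_contra h2
            have hsub : ({ℓ, a} : Finset (Fin k)) ⊆ Finset.univ := Finset.subset_univ _
            have h3 : ((ℓ : ℕ) + 1) * (i ℓ : ℕ) + ((a : ℕ) + 1) * (i a : ℕ) ≤ d := by
              calc ((ℓ : ℕ) + 1) * (i ℓ : ℕ) + ((a : ℕ) + 1) * (i a : ℕ)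
                  = ∑ x ∈ ({ℓ, a} : Finset (Fin k)), ((x : ℕ) + 1) * (i x : ℕ) :=
                    (Finset.sum_pair (f := fun x : Fin k => ((x : ℕ) + 1) * (i x : ℕ)) hℓ).symm
                _ ≤ ∑ x : Fin k, ((x : ℕ) + 1) * (i x : ℕ) :=
                    Finset.sum_le_sum_of_subset hsub
                _ = d := hdeg
            have h4 : 1 ≤ ((ℓ : ℕ) + 1) * (i ℓ : ℕ) :=
              Nat.one_le_iff_ne_zero.mpr (Nat.mul_ne_zero (Nat.succ_ne_zero _) h2)
            rw [hia1, mul_one] at h3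
            omega
          funext ℓ
          by_cases hℓ : ℓ = ℓ0
          · subst hℓ
            have haℓ : a = ℓ := Fin.ext (by omega)
            apply Fin.ext
            rw [hi0]
            simp only [if_pos rfl]
            rw [← haℓ]
            exact hia1
          · apply Fin.ext
            rw [hi0]
            simp only [if_neg hℓ]
            have haℓ0 : a = ℓ0 := Fin.ext (by omega)
            have := hrest ℓ (by rw [haℓ0]; exact hℓ)
            simpa using this
        · have hZa : ⁅Zf a, X⁆ = 0 := IH' a (by omega)
          have hfa : ((ad K L (Zf a)) ^ ((i a : ℕ))) X = 0 :=
            stmt18_pow_kill _ _ (by rw [ad_apply]; exact hZa) _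
              (Nat.one_le_iff_ne_zero.mpr hia)
          have hT0 : ((List.finRange k).map
              (fun ℓ => (ad K L (Zf ℓ)) ^ ((i ℓ : ℕ)))).prod X = 0 :=
            stmt18_tail _ X (List.finRange k) (List.pairwise_lt_finRange k) a
              (List.mem_finRange a)
              (fun c _ hc => by rw [hup c hc, pow_zero]) hfa
          rw [hT0, map_zero, smul_zero]
      · have hne : m ≠ -(k : ℤ) + ((∑ ℓ : Fin k, ((ℓ : ℕ) + 1) * (i ℓ : ℕ) : ℕ) : ℤ) := by
          intro h2
          apply hdeg
          omega
        rw [hproj_ne m _ _ (hTmem i) hne, smul_zero]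
    · intro h; exact absurd (Finset.mem_univ i0) h
  have conj1 : ∀ ℓ : Fin k, (ℓ : ℕ) + 1 ≤ k - 1 → ⁅Zf ℓ, X⁆ = 0 :=
    fun ℓ h => key ((ℓ : ℕ) + 1) ℓ rfl h
  refine ⟨conj1, ?_⟩
  have hb : k - 1 < k := by omega
  set b : Fin k := ⟨k - 1, hb⟩ with hbdef
  have hZkb : Zf b ∈ g (k : ℤ) := by
    have h1 := hZ b
    have heq : ((b : ℤ) + 1) = (k : ℤ) := by
      have : (b : ℕ) = k - 1 := rfl
      push_cast [this]
      omega
    rwa [heq] at h1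
  have had2mem : ((ad K L (Zf b)) ^ 2) X ∈ g (k : ℤ) := by
    have h1 := stmt18_pow_mem g hbracket (Zf b) (k : ℤ) hZkb 2 (-(k : ℤ)) X hX
    have heq : -(k : ℤ) + ((2 : ℕ) : ℤ) * (k : ℤ) = (k : ℤ) := by push_cast; ring
    rwa [heq] at h1
  have hkill2 : ∀ ℓ : Fin k, ⁅Zf ℓ, ((ad K L (Zf b)) ^ 2) X⁆ = 0 := by
    intro ℓ
    have h1 := hbracket _ _ _ _ (hZ ℓ) had2mem
    have h2 : g (((ℓ : ℤ) + 1) + (k : ℤ)) = ⊥ := by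
      apply hbound
      have h3 : (0 : ℤ) ≤ (ℓ : ℤ) := Int.natCast_nonneg _
      rw [abs_of_nonneg (by omega)]
      omega
    rw [h2] at h1
    simpa using h1
  have hkill1 : ∀ ℓ : Fin k, (ℓ : ℕ) + 1 ≤ k - 1 → ⁅Zf ℓ, ⁅Zf b, X⁆⁆ = 0 := by
    intro ℓ hℓ
    have hzz : ⁅Zf ℓ, Zf b⁆ = 0 := by
      have h1 := hbracket _ _ _ _ (hZ ℓ) hZkb
      have h2 : g (((ℓ : ℤ) + 1) + (k : ℤ)) = ⊥ := by
        apply hbound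
        have h3 : (0 : ℤ) ≤ (ℓ : ℤ) := Int.natCast_nonneg _
        rw [abs_of_nonneg (by omega)]
        omega
      rw [h2] at h1
      simpa using h1
    rw [leibniz_lie, hzz, zero_lie, conj1 ℓ hℓ, lie_zero, add_zero]
  set e0 : Fin k → Fin (2 * k + 1) := fun _ => 0 with he0
  set e1 : Fin k → Fin (2 * k + 1) :=
    fun ℓ => if ℓ = b then (⟨1, by omega⟩ : Fin (2 * k + 1)) else 0 with he1
  set e2 : Fin k → Fin (2 * k + 1) :=
    fun ℓ => if ℓ = b then (⟨2, by omega⟩ : Fin (2 * k + 1)) else 0 with he2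
  have hTzero : ∀ i : Fin k → Fin (2 * k + 1), i ≠ e0 → i ≠ e1 → i ≠ e2 →
      ((List.finRange k).map (fun ℓ => (ad K L (Zf ℓ)) ^ ((i ℓ : ℕ)))).prod X = 0 := by
    intro i h0 h1 h2
    by_cases hallz : ∀ ℓ : Fin k, (i ℓ : ℕ) = 0
    · exact absurd (funext fun ℓ => Fin.ext (hallz ℓ) : i = e0) h0
    · push_neg at hallz
      set S := Finset.univ.filter (fun ℓ : Fin k => (i ℓ : ℕ) ≠ 0) with hSdef
      have hSne : S.Nonempty := by
        obtain ⟨ℓ, hℓ⟩ := hallz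
        exact ⟨ℓ, Finset.mem_filter.mpr ⟨Finset.mem_univ _, hℓ⟩⟩
      set a := S.max' hSne with ha
      have haS : a ∈ S := Finset.max'_mem _ _
      have hia : (i a : ℕ) ≠ 0 := (Finset.mem_filter.mp haS).2
      have hup : ∀ c : Fin k, a < c → (i c : ℕ) = 0 := by
        intro c hc
        by_contra hne
        exact absurd (S.le_max' c (Finset.mem_filter.mpr ⟨Finset.mem_univ _, hne⟩))
          (not_le.mpr hc)
      by_cases hab : a = b
      · rcases Nat.lt_or_ge (i a : ℕ) 3 with hlt | hge
        · have h12 : (i a : ℕ) = 1 ∨ (i a : ℕ) = 2 := by omega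
          by_cases hS2 : ∃ c ∈ S, c ≠ a
          · obtain ⟨c0, hc0S, hc0a⟩ := hS2
            have hSea : (S.erase a).Nonempty := ⟨c0, Finset.mem_erase.mpr ⟨hc0a, hc0S⟩⟩
            set a' := (S.erase a).max' hSea with ha'
            have ha'S : a' ∈ S.erase a := Finset.max'_mem _ _
            have ha'ne : a' ≠ a := (Finset.mem_erase.mp ha'S).1
            have ha'ia : (i a' : ℕ) ≠ 0 :=
              (Finset.mem_filter.mp (Finset.mem_erase.mp ha'S).2).2
            have ha'lt : a' < a :=
              lt_of_le_of_ne (S.le_max' a' (Finset.mem_erase.mp ha'S).2) ha'ne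
            have ha'k : (a' : ℕ) + 1 ≤ k - 1 := by
              have hb1 : (a : ℕ) = k - 1 := by rw [hab]
              have hlt' : (a' : ℕ) < (a : ℕ) := ha'lt
              omega
            have hmid : ∀ c ∈ List.finRange k, a' < c → c ≠ a →
                (ad K L (Zf c)) ^ ((i c : ℕ)) = 1 := by
              intro c _ hc hca
              have hc0 : (i c : ℕ) = 0 := by
                by_contra hne
                have hcS : c ∈ S := Finset.mem_filter.mpr ⟨Finset.mem_univ _, hne⟩
                have hle : c ≤ a' := (S.erase a).le_max' c (Finset.mem_erase.mpr ⟨hca, hcS⟩)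
                exact absurd hc (not_lt.mpr hle)
              rw [hc0, pow_zero]
            have hinner : ((ad K L (Zf a')) ^ ((i a' : ℕ)))
                (((ad K L (Zf a)) ^ ((i a : ℕ))) X) = 0 := by
              rcases h12 with h | h
              · rw [h, pow_one, ad_apply, hab]
                exact stmt18_pow_kill _ _ (by rw [ad_apply]; exact hkill1 a' ha'k) _
                  (Nat.one_le_iff_ne_zero.mpr ha'ia)
              · rw [h, hab]
                exact stmt18_pow_kill _ _ (by rw [ad_apply]; exact hkill2 a') _
                  (Nat.one_le_iff_ne_zero.mpr ha'ia)
            exact stmt18_tail2 _ X (List.finRange k) (List.pairwise_lt_finRange k) a' a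
              (List.mem_finRange _) (List.mem_finRange _) ha'lt hmid hinner
          · exfalso
            push_neg at hS2
            have hrest : ∀ ℓ : Fin k, ℓ ≠ a → (i ℓ : ℕ) = 0 := by
              intro ℓ hℓ
              by_contra hne
              exact hℓ (hS2 ℓ (Finset.mem_filter.mpr ⟨Finset.mem_univ _, hne⟩))
            rcases h12 with h | h
            · apply h1
              funext ℓ
              by_cases hℓ : ℓ = b
              · subst hℓ
                apply Fin.ext
                rw [he1]
                simp only [if_pos rfl]
                rw [← hab]
                exact h
              · apply Fin.ext
                rw [he1]
                simp only [if_neg hℓ]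
                exact hrest ℓ (by rw [hab]; exact hℓ)
            · apply h2
              funext ℓ
              by_cases hℓ : ℓ = b
              · subst hℓ
                apply Fin.ext
                rw [he2]
                simp only [if_pos rfl]
                rw [← hab]
                exact h
              · apply Fin.ext
                rw [he2]
                simp only [if_neg hℓ]
                exact hrest ℓ (by rw [hab]; exact hℓ)
        · have h3z : ((ad K L (Zf a)) ^ (3 : ℕ)) X = 0 := by
            rw [pow_succ', Module.End.mul_apply, ad_apply, hab]
            exact hkill2 b
          have hfa : ((ad K L (Zf a)) ^ ((i a : ℕ))) X = 0 := by
            obtain ⟨r, hr⟩ : ∃ r, (i a : ℕ) = r + 3 := ⟨(i a : ℕ) - 3, by omega⟩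
            rw [hr, pow_add, Module.End.mul_apply, h3z, map_zero]
          exact stmt18_tail _ X (List.finRange k) (List.pairwise_lt_finRange k) a
            (List.mem_finRange a) (fun c _ hc => by rw [hup c hc, pow_zero]) hfa
      · have hak : (a : ℕ) + 1 ≤ k - 1 := by
          have h3 : (a : ℕ) < k := a.isLt
          have h4 : (a : ℕ) ≠ k - 1 := fun h => hab (Fin.ext h)
          omega
        have hfa : ((ad K L (Zf a)) ^ ((i a : ℕ))) X = 0 :=
          stmt18_pow_kill _ _ (by rw [ad_apply]; exact conj1 a hak) _
            (Nat.one_le_iff_ne_zero.mpr hia)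
        exact stmt18_tail _ X (List.finRange k) (List.pairwise_lt_finRange k) a
          (List.mem_finRange a) (fun c _ hc => by rw [hup c hc, pow_zero]) hfa
  -- distinctness
  have hne01 : e0 ≠ e1 := by
    intro h
    have h2 := congrArg Fin.val (congrFun h b)
    rw [he0, he1] at h2
    simp at h2
  have hne02 : e0 ≠ e2 := by
    intro h
    have h2 := congrArg Fin.val (congrFun h b)
    rw [he0, he2] at h2
    simp at h2
  have hne12 : e1 ≠ e2 := by
    intro h
    have h2 := congrArg Fin.val (congrFun h b)
    rw [he1, he2] at h2
    simp at h2
  have hsum : (∑ i : Fin k → Fin (2 * k + 1),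
      (∏ ℓ, ((Nat.factorial (i ℓ) : K)))⁻¹ •
        (((List.finRange k).map (fun ℓ => (ad K L (Zf ℓ)) ^ ((i ℓ : ℕ)))).prod X))
      = X + (⁅Zf b, X⁆ + (1 / 2 : K) • ⁅Zf b, ⁅Zf b, X⁆⁆) := by
    rw [← Finset.sum_subset
      (Finset.subset_univ ({e0, e1, e2} : Finset (Fin k → Fin (2 * k + 1))))
      (fun i _ hi => ?_)]
    · rw [Finset.sum_insert (by simp [hne01, hne02]),
        Finset.sum_insert (by simp [hne12]), Finset.sum_singleton]
      have hprod0 : ((List.finRange k).map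
          (fun ℓ => (ad K L (Zf ℓ)) ^ ((e0 ℓ : ℕ)))).prod = 1 :=
        stmt18_prod_one _ _ (fun c _ => by rw [he0]; simp)
      have hprod1 : ((List.finRange k).map
          (fun ℓ => (ad K L (Zf ℓ)) ^ ((e1 ℓ : ℕ)))).prod = ad K L (Zf b) := by
        rw [stmt18_prod_single _ (List.finRange k) (List.pairwise_lt_finRange k) b
          (List.mem_finRange b) (fun c _ hc => by rw [he1]; simp [hc])]
        rw [he1]
        simp
      have hprod2 : ((List.finRange k).map
          (fun ℓ => (ad K L (Zf ℓ)) ^ ((e2 ℓ : ℕ)))).prod = (ad K L (Zf b)) ^ 2 := by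
        rw [stmt18_prod_single _ (List.finRange k) (List.pairwise_lt_finRange k) b
          (List.mem_finRange b) (fun c _ hc => by rw [he2]; simp [hc])]
        rw [he2]
        simp
      have hc0 : (∏ ℓ, ((Nat.factorial (e0 ℓ) : K))) = 1 :=
        Finset.prod_eq_one (fun ℓ _ => by rw [he0]; simp)
      have hc1 : (∏ ℓ, ((Nat.factorial (e1 ℓ) : K))) = 1 :=
        Finset.prod_eq_one (fun ℓ _ => by
          rw [he1]
          by_cases hℓ : ℓ = b <;> simp [hℓ, Nat.factorial])
      have hc2 : (∏ ℓ, ((Nat.factorial (e2 ℓ) : K))) = 2 := by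
        rw [Finset.prod_eq_single b (fun c _ hc => by rw [he2]; simp [hc, Nat.factorial])
          (fun h => absurd (Finset.mem_univ b) h)]
        rw [he2]
        simp [Nat.factorial]
      rw [hprod0, hprod1, hprod2, hc0, hc1, hc2, inv_one, one_smul, one_smul]
      have hsq : ((ad K L (Zf b)) ^ 2) X = ⁅Zf b, ⁅Zf b, X⁆⁆ := by
        rw [pow_two, Module.End.mul_apply, ad_apply, ad_apply]
      rw [Module.End.one_apply, ad_apply, hsq, one_div]
    · have h3 : i ≠ e0 ∧ i ≠ e1 ∧ i ≠ e2 := by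
        simpa using hi
      rw [hTzero i h3.1 h3.2.1 h3.2.2, smul_zero]
  rw [hW, hsum, add_sub_cancel_left]
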